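/- arXiv:2502.11507 — 2 statements merged into one kernel-verified Lean document; each statement's English description precedes it below -/
import Mathlib

section
/- For the Dhillon failure rate r₁(x) = θν x^{θ-1}/(ν x^θ + 1) with θ > 1 and ν > 0, r₁ has an inverted-bathtub (unimodal) shape: r₁(x) → 0 as x → 0⁺, r₁(x) → 0 as x → ∞, and r₁ attains a unique maximum at x* = ((θ-1)/ν)^{1/θ}, being strictly increasing on (0, x*) and strictly decreasing on (x*, ∞). -/
open Real Filter

/-- For `θ > 1` the Dhillon failure rate is unimodal (inverted bathtub): it vanishes
at `0⁺` and at `∞`, is strictly increasing up to `x* = ((θ-1)/ν)^{1/θ}`, strictly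
decreasing afterwards, and attains a unique maximum at `x*`. -/
theorem dhillon_frf_inverted_bathtub (ν θ : ℝ) (hν : 0 < ν) (hθ : 1 < θ) :
    Tendsto (fun x => θ * ν * x ^ (θ - 1) / (ν * x ^ θ + 1))
        (nhdsWithin 0 (Set.Ioi 0)) (nhds 0) ∧
      Tendsto (fun x => θ * ν * x ^ (θ - 1) / (ν * x ^ θ + 1)) atTop (nhds 0) ∧
      StrictMonoOn (fun x => θ * ν * x ^ (θ - 1) / (ν * x ^ θ + 1))
        (Set.Ioc 0 (((θ - 1) / ν) ^ (1 / θ))) ∧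
      StrictAntiOn (fun x => θ * ν * x ^ (θ - 1) / (ν * x ^ θ + 1))
        (Set.Ici (((θ - 1) / ν) ^ (1 / θ))) ∧
      ∀ x ∈ Set.Ioi (0 : ℝ), x ≠ ((θ - 1) / ν) ^ (1 / θ) →
        θ * ν * x ^ (θ - 1) / (ν * x ^ θ + 1)
          < θ * ν * (((θ - 1) / ν) ^ (1 / θ)) ^ (θ - 1) /
              (ν * (((θ - 1) / ν) ^ (1 / θ)) ^ θ + 1) := by
  have hθ0 : (0:ℝ) < θ := by linarith
  set f : ℝ → ℝ := fun x => θ * ν * x ^ (θ - 1) / (ν * x ^ θ + 1) with hf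
  set c : ℝ := (θ - 1) / ν with hc
  have hcpos : 0 < c := div_pos (by linarith) hν
  set xs : ℝ := c ^ (1 / θ) with hxs
  have hxspos : 0 < xs := rpow_pos_of_pos hcpos _
  -- derivative
  have hden : ∀ x : ℝ, 0 < x → 0 < ν * x ^ θ + 1 := fun x hx => by positivity
  have hderiv : ∀ x : ℝ, 0 < x → HasDerivAt f
      (θ * ν * x ^ (θ - 2) * ((θ - 1) - ν * x ^ θ) / (ν * x ^ θ + 1) ^ 2) x := by
    intro x hx
    have hnum : HasDerivAt (fun x : ℝ => θ * ν * x ^ (θ - 1))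
        (θ * ν * ((θ - 1) * x ^ (θ - 1 - 1))) x :=
      (Real.hasDerivAt_rpow_const (Or.inl hx.ne')).const_mul (θ * ν)
    have hd : HasDerivAt (fun x : ℝ => ν * x ^ θ + 1) (ν * (θ * x ^ (θ - 1))) x :=
      ((Real.hasDerivAt_rpow_const (Or.inl hx.ne')).const_mul ν).add_const 1
    have := hnum.div hd (hden x hx).ne'
    exact this.congr_deriv (Eq.symm (by
    have e1 : x ^ (θ - 1 - 1) = x ^ (θ - 2) := by congr 1; ring
    have e2 : x ^ (θ - 1) * x ^ (θ - 1) = x ^ (θ - 2) * x ^ θ := by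
      rw [← Real.rpow_add hx, ← Real.rpow_add hx]; congr 1; ring
    rw [e1]
    congr 1
    linear_combination (θ ^ 2 * ν ^ 2) * e2))
  have hxsθ : xs ^ θ = c := by
    rw [hxs, one_div, Real.rpow_inv_rpow hcpos.le hθ0.ne']
  have hlt : ∀ x : ℝ, 0 ≤ x → (x < xs ↔ ν * x ^ θ < θ - 1) := by
    intro x hx
    rw [hxs, one_div, Real.lt_rpow_inv_iff_of_pos hx hcpos.le hθ0, hc,
      lt_div_iff₀ hν]
    constructor <;> intro h <;> nlinarith
  have hgt : ∀ x : ℝ, 0 ≤ x → (xs < x ↔ θ - 1 < ν * x ^ θ) := by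
    intro x hx
    rw [hxs, one_div, Real.rpow_inv_lt_iff_of_pos hcpos.le hx hθ0, hc,
      div_lt_iff₀ hν]
    constructor <;> intro h <;> nlinarith
  have hcontOn : ∀ s : Set ℝ, s ⊆ Set.Ioi 0 → ContinuousOn f s := by
    intro s hs x hx
    exact ((hderiv x (hs hx)).continuousAt).continuousWithinAt
  have hmono : StrictMonoOn f (Set.Ioc 0 xs) := by
    apply strictMonoOn_of_deriv_pos (convex_Ioc 0 xs)
      (hcontOn _ (fun x hx => hx.1))
    intro x hx
    rw [interior_Ioc] at hx
    rw [(hderiv x hx.1).deriv]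
    have h1 : ν * x ^ θ < θ - 1 := (hlt x hx.1.le).1 hx.2
    have h2 : (0:ℝ) < x ^ (θ - 2) := rpow_pos_of_pos hx.1 _
    apply div_pos
    · exact mul_pos (mul_pos (mul_pos hθ0 hν) h2) (by linarith)
    · exact pow_pos (hden x hx.1) 2
  have hanti : StrictAntiOn f (Set.Ici xs) := by
    apply strictAntiOn_of_deriv_neg (convex_Ici xs)
      (hcontOn _ (fun x hx => lt_of_lt_of_le hxspos hx))
    intro x hx
    rw [interior_Ici] at hx
    have hxp : 0 < x := hxspos.trans hx
    rw [(hderiv x hxp).deriv]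
    have h1 : θ - 1 < ν * x ^ θ := (hgt x hxp.le).1 hx
    have h2 : (0:ℝ) < x ^ (θ - 2) := rpow_pos_of_pos hxp _
    apply div_neg_of_neg_of_pos
    · exact mul_neg_of_pos_of_neg (mul_pos (mul_pos hθ0 hν) h2) (by linarith)
    · exact pow_pos (hden x hxp) 2
  refine ⟨?_, ?_, hmono, hanti, ?_⟩
  · -- limit at 0+
    have h1 : ContinuousAt (fun x : ℝ => x ^ (θ - 1)) 0 :=
      Real.continuousAt_rpow_const 0 _ (Or.inr (by linarith))
    have h2 : ContinuousAt (fun x : ℝ => x ^ θ) 0 :=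
      Real.continuousAt_rpow_const 0 _ (Or.inr hθ0.le)
    have h3 : ContinuousAt f 0 := by
      apply ContinuousAt.div ((continuousAt_const.mul h1))
        ((continuousAt_const.mul h2).add continuousAt_const)
      simp [Real.zero_rpow hθ0.ne']
    have := h3.tendsto.mono_left (nhdsWithin_le_nhds (s := Set.Ioi 0))
    simpa [f, Real.zero_rpow hθ0.ne', Real.zero_rpow (by linarith : θ - 1 ≠ 0)] using this
  · -- limit at infinity
    have hbound : ∀ x : ℝ, 1 ≤ x → f x ≤ θ / x := by
      intro x hx
      have hxp : (0:ℝ) < x := lt_of_lt_of_le one_pos hx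
      have key : θ / x = θ * ν * x ^ (θ - 1) / (ν * x ^ θ) := by
        have : x ^ θ = x ^ (θ - 1) * x := by
          rw [← Real.rpow_add_one hxp.ne']; ring_nf
        rw [this]
        have hp : (0:ℝ) < x ^ (θ - 1) := rpow_pos_of_pos hxp _
        field_simp
      rw [hf, key]
      apply div_le_div_of_nonneg_left (by positivity) (by positivity)
      linarith
    have hnn : ∀ x : ℝ, 1 ≤ x → (0:ℝ) ≤ f x := by
      intro x hx
      have hxp : (0:ℝ) < x := lt_of_lt_of_le one_pos hx
      have := hden x hxp
      have : (0:ℝ) < x ^ (θ - 1) := rpow_pos_of_pos hxp _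
      positivity
    have htop : Tendsto (fun x : ℝ => θ / x) atTop (nhds 0) :=
      tendsto_const_nhds.div_atTop tendsto_id
    exact tendsto_of_tendsto_of_tendsto_of_le_of_le' tendsto_const_nhds htop
      (eventually_atTop.2 ⟨1, hnn⟩) (eventually_atTop.2 ⟨1, hbound⟩)
  · intro x hx hne
    rcases lt_or_gt_of_ne hne with h | h
    · exact hmono ⟨hx, h.le⟩ ⟨hxspos, le_refl _⟩ h
    · exact hanti (Set.self_mem_Ici) (le_of_lt h) h
end

section
/- For the BFM model, the function W_BFM(x) = 1 - exp{1 - e^{(ζx)^τ}}/(ν x^θ + 1), with all parameters positive, is a cumulative distribution function on (0, ∞): it is monotone nondecreasing, tends to 0 as x → 0⁺, and tends to 1 as x → ∞. -/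
open Real Filter

/-- The BFM CDF is nondecreasing on `(0, ∞)`, tends to `0` as `x → 0⁺`, and tends to `1`
as `x → ∞`. -/
theorem bfm_cdf (ν θ τ ζ : ℝ) (hν : 0 < ν) (hθ : 0 < θ) (hτ : 0 < τ) (hζ : 0 < ζ) :
    MonotoneOn (fun x => 1 - Real.exp (1 - Real.exp ((ζ * x) ^ τ)) / (ν * x ^ θ + 1))
        (Set.Ioi (0 : ℝ)) ∧
      Tendsto (fun x => 1 - Real.exp (1 - Real.exp ((ζ * x) ^ τ)) / (ν * x ^ θ + 1))
        (nhdsWithin 0 (Set.Ioi 0)) (nhds 0) ∧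
      Tendsto (fun x => 1 - Real.exp (1 - Real.exp ((ζ * x) ^ τ)) / (ν * x ^ θ + 1))
        atTop (nhds 1) := by
  refine ⟨?_, ?_, ?_⟩
  · -- monotone
    intro x hx y hy hxy
    simp only
    have hx0 : (0:ℝ) < x := hx
    have hy0 : (0:ℝ) < y := hy
    have hnum : Real.exp (1 - Real.exp ((ζ * y) ^ τ)) ≤
        Real.exp (1 - Real.exp ((ζ * x) ^ τ)) := by
      apply Real.exp_le_exp.2
      have : (ζ * x) ^ τ ≤ (ζ * y) ^ τ :=
        Real.rpow_le_rpow (by positivity) (by nlinarith) hτ.le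
      have := Real.exp_le_exp.2 this
      linarith
    have hden : ν * x ^ θ + 1 ≤ ν * y ^ θ + 1 := by
      have : x ^ θ ≤ y ^ θ := Real.rpow_le_rpow hx0.le hxy hθ.le
      nlinarith
    have hdx : (0:ℝ) < ν * x ^ θ + 1 := by positivity
    have h := div_le_div₀ (Real.exp_nonneg _) hnum hdx hden
    linarith
  · -- limit at 0⁺
    have hc : ContinuousAt (fun x : ℝ =>
        1 - Real.exp (1 - Real.exp ((ζ * x) ^ τ)) / (ν * x ^ θ + 1)) 0 := by
      have h1 : ContinuousAt (fun x : ℝ => (ζ * x) ^ τ) 0 := by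
        have := (Real.continuousAt_rpow_const (ζ * 0) τ (Or.inr hτ.le))
        exact this.comp (by fun_prop)
      have h2 : ContinuousAt (fun x : ℝ => x ^ θ) 0 :=
        Real.continuousAt_rpow_const 0 θ (Or.inr hθ.le)
      have hden : ContinuousAt (fun x : ℝ => ν * x ^ θ + 1) 0 := by
        exact ((continuousAt_const.mul h2).add continuousAt_const)
      have hdenne : (fun x : ℝ => ν * x ^ θ + 1) 0 ≠ 0 := by
        simp [Real.zero_rpow hθ.ne']
      have hnum : ContinuousAt (fun x : ℝ =>
          Real.exp (1 - Real.exp ((ζ * x) ^ τ))) 0 := by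
        exact Real.continuous_exp.continuousAt.comp
          (continuousAt_const.sub (Real.continuous_exp.continuousAt.comp h1))
      exact continuousAt_const.sub (hnum.div hden hdenne)
    have h2 := hc.tendsto.mono_left (nhdsWithin_le_nhds (s := Set.Ioi (0:ℝ)))
    convert h2 using 2
    simp [Real.zero_rpow hτ.ne', Real.zero_rpow hθ.ne']
  · -- limit at ∞
    have hmul : Tendsto (fun x : ℝ => ζ * x) atTop atTop :=
      tendsto_id.const_mul_atTop hζ
    have hinner : Tendsto (fun x : ℝ => (ζ * x) ^ τ) atTop atTop :=
      (tendsto_rpow_atTop hτ).comp hmul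
    have hnum : Tendsto (fun x : ℝ => Real.exp (1 - Real.exp ((ζ * x) ^ τ))) atTop (nhds 0) := by
      apply Real.tendsto_exp_atBot.comp
      have h := tendsto_atBot_add_const_left atTop (1:ℝ)
        (tendsto_neg_atTop_atBot.comp (Real.tendsto_exp_atTop.comp hinner))
      exact h.congr fun x => by simp [sub_eq_add_neg]
    have hden : Tendsto (fun x : ℝ => ν * x ^ θ + 1) atTop atTop := by
      apply tendsto_atTop_add_const_right
      exact (tendsto_rpow_atTop hθ).const_mul_atTop hν
    have hdiv := hnum.div_atTop hden
    have := hdiv.const_sub 1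
    simpa using this
end
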